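/- arXiv:1506.06671 — 5 statements merged into one kernel-verified Lean document; each statement's English description precedes it below -/
import Mathlib

section
/- For every i ∈ {0,1,2,3}, the estimator X_i is unbiased: E[X_i] = n_i, where the expectation is over the random edge sampling. -/
open Finset

noncomputable section
open scoped Classical

namespace ThreeProfile

variable {V : Type*}

/-- Edges of an edge set `F` whose endpoints both lie in the vertex set `s`. -/
def edgesIn (F : Finset (Sym2 V)) (s : Finset V) : Finset (Sym2 V) :=
  F.filter (fun e => ∀ x ∈ e, x ∈ s)

/-- All 3-element subsets of the vertex set. -/
def triples (V : Type*) [Fintype V] : Finset (Finset V) :=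
  (Finset.univ : Finset V).powersetCard 3

/-- Number of 3-subsets of `V` inducing exactly `i` edges from `F`. -/
def Ycount [Fintype V] (F : Finset (Sym2 V)) (i : ℕ) : ℕ :=
  ((triples V).filter (fun s => (edgesIn F s).card = i)).card

/-- Expectation over the random subgraph keeping each edge independently w.p. `p`. -/
def expVal [Fintype V] (G : SimpleGraph V) (p : ℝ) (f : Finset (Sym2 V) → ℝ) : ℝ :=
  ∑ F ∈ G.edgeFinset.powerset,
    p ^ F.card * (1 - p) ^ (G.edgeFinset.card - F.card) * f F

/-- The unbiased estimators of the 3-profile. -/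
def Xest [Fintype V] (p : ℝ) (i : ℕ) (F : Finset (Sym2 V)) : ℝ :=
  match i with
  | 0 => (Ycount F 0 : ℝ) - (1 - p) * Ycount F 1 / p + (1 - p) ^ 2 * Ycount F 2 / p ^ 2
           - (1 - p) ^ 3 * Ycount F 3 / p ^ 3
  | 1 => (Ycount F 1 : ℝ) / p - 2 * (1 - p) * Ycount F 2 / p ^ 2
           + 3 * (1 - p) ^ 2 * Ycount F 3 / p ^ 3
  | 2 => (Ycount F 2 : ℝ) / p ^ 2 - 3 * (1 - p) * Ycount F 3 / p ^ 3
  | 3 => (Ycount F 3 : ℝ) / p ^ 3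
  | _ => 0

/-! ### Auxiliary material -/

/-- Summing over subsets of a disjoint union splits as a double sum. -/
theorem sum_powerset_union' {α : Type*} [DecidableEq α] {A D : Finset α}
    (h : Disjoint A D) (f : Finset α → ℝ) :
    ∑ F ∈ (A ∪ D).powerset, f F = ∑ B ∈ A.powerset, ∑ C ∈ D.powerset, f (B ∪ C) := by
  rw [← Finset.sum_product']
  refine Finset.sum_nbij' (fun F => (F ∩ A, F ∩ D)) (fun P => P.1 ∪ P.2) ?_ ?_ ?_ ?_ ?_
  · intro F hF
    simp only [mem_powerset] at hF ⊢
    simp only [mem_product, mem_powerset]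
    exact ⟨inter_subset_right, inter_subset_right⟩
  · intro P hP
    simp only [mem_product, mem_powerset] at hP
    simp only [mem_powerset]
    exact union_subset (hP.1.trans subset_union_left) (hP.2.trans subset_union_right)
  · intro F hF
    simp only [mem_powerset] at hF
    show F ∩ A ∪ F ∩ D = F
    rw [← inter_union_distrib_left, inter_eq_left.2 hF]
  · intro P hP
    simp only [mem_product, mem_powerset] at hP
    have h1 : (P.1 ∪ P.2) ∩ A = P.1 := by
      rw [union_inter_distrib_right, inter_eq_left.2 hP.1,
        disjoint_iff_inter_eq_empty.1 (h.symm.mono_left hP.2), union_empty]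
    have h2 : (P.1 ∪ P.2) ∩ D = P.2 := by
      rw [union_inter_distrib_right, inter_eq_left.2 hP.2,
        disjoint_iff_inter_eq_empty.1 (h.mono_left hP.1), empty_union]
    show ((P.1 ∪ P.2) ∩ A, (P.1 ∪ P.2) ∩ D) = P
    rw [h1, h2]
  · intro F hF
    simp only [mem_powerset] at hF
    show f F = f (F ∩ A ∪ F ∩ D)
    rw [← inter_union_distrib_left, inter_eq_left.2 hF]

/-- Marginalization: the $p$-biased sum over subsets of `E` of a function of `|F ∩ A|`
reduces to a binomial sum over `|A|`. -/
theorem marg' {α : Type*} [DecidableEq α] {E A : Finset α} (hA : A ⊆ E) (p : ℝ) (h : ℕ → ℝ) :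
    ∑ F ∈ E.powerset, p ^ F.card * (1 - p) ^ (E.card - F.card) * h ((F ∩ A).card)
    = ∑ j ∈ Finset.range (A.card + 1),
        (A.card.choose j : ℝ) * (p ^ j * (1 - p) ^ (A.card - j) * h j) := by
  have hdisj : Disjoint A (E \ A) := disjoint_sdiff
  have hE : A ∪ (E \ A) = E := union_sdiff_of_subset hA
  rw [← hE, sum_powerset_union' hdisj]
  have step : ∀ B ∈ A.powerset, ∀ C ∈ (E \ A).powerset,
      p ^ (B ∪ C).card * (1 - p) ^ ((A ∪ (E \ A)).card - (B ∪ C).card) * h (((B ∪ C) ∩ A).card)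
      = (p ^ B.card * (1 - p) ^ (A.card - B.card) * h B.card)
        * (p ^ C.card * (1 - p) ^ ((E \ A).card - C.card)) := by
    intro B hB C hC
    rw [mem_powerset] at hB hC
    have hBC : Disjoint B C := hdisj.mono hB hC
    have h1 : (B ∪ C) ∩ A = B := by
      rw [union_inter_distrib_right, inter_eq_left.2 hB,
        disjoint_iff_inter_eq_empty.1 (hdisj.symm.mono_left hC), union_empty]
    have h2 : (B ∪ C).card = B.card + C.card := card_union_of_disjoint hBC
    have h3 : (A ∪ (E \ A)).card - (B.card + C.card)
        = (A.card - B.card) + ((E \ A).card - C.card) := by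
      have := card_le_card hB
      have := card_le_card hC
      rw [card_union_of_disjoint hdisj]
      omega
    rw [h1, h2, h3, pow_add, pow_add]
    ring
  rw [Finset.sum_congr rfl (fun B hB => Finset.sum_congr rfl (step B hB))]
  have hone : ∑ C ∈ (E \ A).powerset, p ^ C.card * (1 - p) ^ ((E \ A).card - C.card) = 1 := by
    rw [Finset.sum_pow_mul_eq_add_pow]
    simp
  calc ∑ B ∈ A.powerset, ∑ C ∈ (E \ A).powerset,
        (p ^ B.card * (1 - p) ^ (A.card - B.card) * h B.card)
        * (p ^ C.card * (1 - p) ^ ((E \ A).card - C.card))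
      = ∑ B ∈ A.powerset, (p ^ B.card * (1 - p) ^ (A.card - B.card) * h B.card) := by
        refine Finset.sum_congr rfl fun B hB => ?_
        rw [← Finset.mul_sum, hone, mul_one]
    _ = ∑ j ∈ Finset.range (A.card + 1),
        (A.card.choose j : ℝ) * (p ^ j * (1 - p) ^ (A.card - j) * h j) := by
        rw [Finset.sum_powerset_apply_card (fun m => p ^ m * (1 - p) ^ (A.card - m) * h m)]
        simp [nsmul_eq_mul]

/-- The per-triple coefficient of the estimator `Xest p i` in front of the indicator that the
triple induces exactly `j` edges. -/
def coef (p : ℝ) (i j : ℕ) : ℝ :=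
  match i with
  | 0 => (if j = 0 then (1:ℝ) else 0) - (1 - p) * (if j = 1 then (1:ℝ) else 0) / p
        + (1 - p) ^ 2 * (if j = 2 then (1:ℝ) else 0) / p ^ 2
        - (1 - p) ^ 3 * (if j = 3 then (1:ℝ) else 0) / p ^ 3
  | 1 => (if j = 1 then (1:ℝ) else 0) / p - 2 * (1 - p) * (if j = 2 then (1:ℝ) else 0) / p ^ 2
        + 3 * (1 - p) ^ 2 * (if j = 3 then (1:ℝ) else 0) / p ^ 3
  | 2 => (if j = 2 then (1:ℝ) else 0) / p ^ 2 - 3 * (1 - p) * (if j = 3 then (1:ℝ) else 0) / p ^ 3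
  | 3 => (if j = 3 then (1:ℝ) else 0) / p ^ 3
  | _ => 0

/-- The binomial expectation of the coefficient function is the desired indicator. -/
theorem coef_sum {p : ℝ} (hp : p ≠ 0) {i k : ℕ} (hi : i ≤ 3) (hk : k ≤ 3) :
    ∑ j ∈ Finset.range (k + 1), (k.choose j : ℝ) * (p ^ j * (1 - p) ^ (k - j) * coef p i j)
    = if k = i then 1 else 0 := by
  interval_cases i <;> interval_cases k <;>
    simp [coef, Finset.sum_range_succ, Nat.choose] <;> field_simp <;> ring

/-- A 3-set of vertices induces at most 3 edges. -/
lemma edgesIn_card_le [Fintype V] (G : SimpleGraph V) {s : Finset V}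
    (hs : s ∈ triples V) : (edgesIn G.edgeFinset s).card ≤ 3 := by
  rw [triples, mem_powersetCard] at hs
  have hsub : edgesIn G.edgeFinset s ⊆ s.sym2 \ s.image Sym2.diag := by
    intro e he
    simp only [edgesIn, mem_filter] at he
    rw [mem_sdiff, Finset.mem_sym2_iff]
    refine ⟨he.2, ?_⟩
    intro hmem
    rw [mem_image] at hmem
    obtain ⟨a, _, rfl⟩ := hmem
    exact G.not_isDiag_of_mem_edgeSet (SimpleGraph.mem_edgeFinset.1 he.1) (Sym2.diag_isDiag a)
  have himg : s.image Sym2.diag ⊆ s.sym2 := by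
    intro e he
    rw [mem_image] at he
    obtain ⟨a, ha, rfl⟩ := he
    rw [Sym2.diag, Finset.mk_mem_sym2_iff]
    exact ⟨ha, ha⟩
  have := card_le_card hsub
  rw [card_sdiff_of_subset himg, Finset.card_sym2,
    card_image_of_injective _ Sym2.diag_injective, hs.2] at this
  simpa [Nat.choose] using this

lemma edgesIn_inter {E F : Finset (Sym2 V)} (hF : F ⊆ E) (s : Finset V) :
    edgesIn F s = F ∩ edgesIn E s := by
  ext e
  simp only [edgesIn, mem_filter, mem_inter]
  exact ⟨fun h => ⟨h.1, hF h.1, h.2⟩, fun h => ⟨h.1, h.2.2⟩⟩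

lemma Ycount_cast [Fintype V] (F : Finset (Sym2 V)) (j : ℕ) :
    (Ycount F j : ℝ) = ∑ s ∈ triples V, (if (edgesIn F s).card = j then (1:ℝ) else 0) := by
  rw [Ycount, Finset.card_filter, Nat.cast_sum]
  exact Finset.sum_congr rfl fun s _ => by split <;> simp

lemma Xest_eq_sum [Fintype V] (p : ℝ) {i : ℕ} (hi : i ≤ 3) (F : Finset (Sym2 V)) :
    Xest p i F = ∑ s ∈ triples V, coef p i ((edgesIn F s).card) := by
  interval_cases i <;>
    simp only [Xest, coef, Ycount_cast, Finset.mul_sum, Finset.sum_div,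
      ← Finset.sum_sub_distrib, ← Finset.sum_add_distrib] <;>
    exact Finset.sum_congr rfl fun s _ => by ring

theorem unbiased_estimator {V : Type*} [Fintype V] (G : SimpleGraph V)
    (p : ℝ) (hp : 0 < p) (hp1 : p ≤ 1) :
    ∀ i ≤ 3, expVal G p (Xest p i) = (Ycount G.edgeFinset i : ℝ) := by
  intro i hi
  have hp0 : p ≠ 0 := ne_of_gt hp
  rw [expVal]
  calc ∑ F ∈ G.edgeFinset.powerset,
        p ^ F.card * (1 - p) ^ (G.edgeFinset.card - F.card) * Xest p i F
      = ∑ F ∈ G.edgeFinset.powerset, ∑ s ∈ triples V,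
          p ^ F.card * (1 - p) ^ (G.edgeFinset.card - F.card)
            * coef p i ((F ∩ edgesIn G.edgeFinset s).card) := by
        refine Finset.sum_congr rfl fun F hF => ?_
        rw [Xest_eq_sum p hi F, Finset.mul_sum]
        refine Finset.sum_congr rfl fun s _ => ?_
        rw [edgesIn_inter (mem_powerset.1 hF) s]
    _ = ∑ s ∈ triples V, ∑ F ∈ G.edgeFinset.powerset,
          p ^ F.card * (1 - p) ^ (G.edgeFinset.card - F.card)
            * coef p i ((F ∩ edgesIn G.edgeFinset s).card) := Finset.sum_comm
    _ = ∑ s ∈ triples V, (if (edgesIn G.edgeFinset s).card = i then (1:ℝ) else 0) := by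
        refine Finset.sum_congr rfl fun s hs => ?_
        have hA : edgesIn G.edgeFinset s ⊆ G.edgeFinset := by
          intro e he
          simp only [edgesIn, mem_filter] at he
          exact he.1
        rw [marg' hA p (coef p i)]
        exact coef_sum hp0 hi (edgesIn_card_le G hs)
    _ = (Ycount G.edgeFinset i : ℝ) := (Ycount_cast G.edgeFinset i).symm

end ThreeProfile
end
end

section
/- Assume G has at least one edge and 0 ≤ p ≤ 1. The polynomial Y_3(t) = Σ_{triangles {e,f,g}} t_e·t_f·t_g in the variables (t_e)_{e∈E} (the sum ranging over all triangles of G with edge sets {e,f,g}) is totally positive; moreover, when the variables t_e are evaluated at independent Bernoulli(p) random variables, E_{≥1}[Y_3] ≤ max{1, p^2·Δ}. -/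
open Finset MvPolynomial

noncomputable section
open scoped Classical

namespace ThreeProfile

variable {V : Type*}

/-- 3-subsets of `V` inducing exactly `i` edges of `G`. -/
def triplesWith [Fintype V] (G : SimpleGraph V) (i : ℕ) : Finset (Finset V) :=
  (triples V).filter (fun s => (edgesIn G.edgeFinset s).card = i)

/-- A polynomial (in variables indexed by `Sym2 V`) is totally positive if all of its
monomial coefficients are nonnegative. -/
def TotallyPositive (f : MvPolynomial (Sym2 V) ℝ) : Prop :=
  ∀ m : Sym2 V →₀ ℕ, 0 ≤ f.coeff m

/-- Iterated partial derivative `∂^a f` for a multi-index `a`. -/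
def iterDeriv (a : Sym2 V →₀ ℕ) (f : MvPolynomial (Sym2 V) ℝ) :
    MvPolynomial (Sym2 V) ℝ :=
  a.support.toList.foldr (fun i g => (fun h => MvPolynomial.pderiv i h)^[a i] g) f

/-- Expectation of a polynomial when the variables are evaluated at independent
Bernoulli(`q`) random variables. -/
def bernoulliExp [Fintype V] (q : ℝ) (f : MvPolynomial (Sym2 V) ℝ) : ℝ :=
  ∑ S ∈ (Finset.univ : Finset (Sym2 V)).powerset,
    q ^ S.card * (1 - q) ^ (Fintype.card (Sym2 V) - S.card) *
      MvPolynomial.eval (fun e => if e ∈ S then (1 : ℝ) else 0) f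

/-- Number of triangles of `G` containing the edge `e`. -/
def deltaE [Fintype V] (G : SimpleGraph V) (e : Sym2 V) : ℕ :=
  ((triples V).filter
    (fun s => (edgesIn G.edgeFinset s).card = 3 ∧ e ∈ edgesIn G.edgeFinset s)).card

/-- The polynomial `Y₃(t) = Σ_{triangles {e,f,g}} t_e t_f t_g`. -/
def Y3poly [Fintype V] (G : SimpleGraph V) : MvPolynomial (Sym2 V) ℝ :=
  ∑ s ∈ triplesWith G 3, ∏ e ∈ edgesIn G.edgeFinset s, X e

/-! ### Auxiliary machinery -/

/-- The 0/1 multi-index supported on a finite set of edges. -/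
def indic (T : Finset (Sym2 V)) : Sym2 V →₀ ℕ := ∑ e ∈ T, Finsupp.single e 1

lemma indic_apply (T : Finset (Sym2 V)) (i : Sym2 V) : indic T i = if i ∈ T then 1 else 0 := by
  classical
  simp [indic, Finsupp.finset_sum_apply, Finsupp.single_apply]

lemma indic_support (T : Finset (Sym2 V)) : (indic T).support = T := by
  ext i; simp [Finsupp.mem_support_iff, indic_apply]

lemma prod_X_eq (T : Finset (Sym2 V)) :
    (∏ e ∈ T, X e : MvPolynomial (Sym2 V) ℝ) = monomial (indic T) 1 := by
  classical
  induction T using Finset.induction with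
  | empty => simp [indic]
  | @insert _ _ h ih =>
    rw [Finset.prod_insert h, ih, X, monomial_mul, one_mul]
    congr 1
    simp [indic, Finset.sum_insert h]

lemma indic_sub_single (T : Finset (Sym2 V)) (i : Sym2 V) (h : i ∈ T) :
    indic T - Finsupp.single i 1 = indic (T.erase i) := by
  ext j
  rw [Finsupp.tsub_apply]
  simp only [indic_apply, Finsupp.single_apply, Finset.mem_erase]
  by_cases hji : j = i <;> by_cases hjT : j ∈ T <;> simp_all [eq_comm]

lemma pderiv_mon (i : Sym2 V) (T : Finset (Sym2 V)) (c : ℝ) :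
    pderiv i (monomial (indic T) c) =
      if i ∈ T then monomial (indic (T.erase i)) c else 0 := by
  rw [pderiv_monomial, indic_apply]
  split
  · rw [indic_sub_single T i ‹_›]
    norm_num
  · simp

lemma iter_pderiv_mon (i : Sym2 V) (k : ℕ) (hk : k ≠ 0) (T : Finset (Sym2 V)) (c : ℝ) :
    (fun h => pderiv i h)^[k] (monomial (indic T) c) =
      if k = 1 ∧ i ∈ T then monomial (indic (T.erase i)) c else 0 := by
  match k with
  | 1 =>
    simp only [Function.iterate_one]
    rw [pderiv_mon]
    simp
  | (n+2) =>
    have h2 : (fun h => pderiv i h)^[n+2] (monomial (indic T) c)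
        = (fun h => pderiv i h)^[n] (pderiv i (pderiv i (monomial (indic T) c))) := by
      rw [show n + 2 = n + 1 + 1 from rfl, Function.iterate_succ_apply,
        Function.iterate_succ_apply]
    rw [h2]
    have hz : pderiv i (pderiv i (monomial (indic T) c)) = 0 := by
      rw [pderiv_mon]
      split
      · rw [pderiv_mon, if_neg (Finset.notMem_erase i T)]
      · simp
    rw [hz, Function.iterate_fixed (by simp) n, if_neg (by omega)]

lemma iter_pderiv_sum (i : Sym2 V) (k : ℕ) {ι : Type*} (S : Finset ι)
    (f : ι → MvPolynomial (Sym2 V) ℝ) :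
    (fun h => pderiv i h)^[k] (∑ s ∈ S, f s) = ∑ s ∈ S, (fun h => pderiv i h)^[k] (f s) := by
  induction k with
  | zero => simp
  | succ n ih =>
    rw [Function.iterate_succ_apply', ih]
    simp only [Function.iterate_succ_apply']
    exact map_sum (pderiv i) _ S

lemma foldr_deriv (a : Sym2 V →₀ ℕ) (L : List (Sym2 V)) (hN : L.Nodup)
    (hL : ∀ i ∈ L, a i ≠ 0) (T : Finset (Sym2 V)) (c : ℝ) :
    L.foldr (fun i g => (fun h => pderiv i h)^[a i] g) (monomial (indic T) c) =
      if (∀ i ∈ L, a i = 1) ∧ (∀ i ∈ L, i ∈ T) then monomial (indic (T \ L.toFinset)) c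
      else 0 := by
  induction L with
  | nil => simp
  | cons i L' ih =>
    have hN' : L'.Nodup := hN.of_cons
    have hiL' : i ∉ L' := by simp_all [List.nodup_cons]
    rw [List.foldr_cons, ih hN' (fun j hj => hL j (List.mem_cons_of_mem i hj))]
    by_cases hC' : (∀ j ∈ L', a j = 1) ∧ (∀ j ∈ L', j ∈ T)
    · rw [if_pos hC']
      rw [iter_pderiv_mon i (a i) (hL i (List.mem_cons_self)) _ c]
      have hiT : i ∈ T \ L'.toFinset ↔ i ∈ T := by simp [hiL']
      by_cases hai : a i = 1 <;> by_cases hiT' : i ∈ T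
      · have hset : (T \ L'.toFinset).erase i = T \ (i :: L').toFinset := by
          ext j
          simp only [Finset.mem_erase, Finset.mem_sdiff, List.toFinset_cons,
            Finset.mem_insert, List.mem_toFinset]
          tauto
        rw [if_pos ⟨hai, hiT.mpr hiT'⟩, hset, if_pos]
        constructor
        · intro j hj
          rcases List.mem_cons.mp hj with rfl | hj
          · exact hai
          · exact hC'.1 j hj
        · intro j hj
          rcases List.mem_cons.mp hj with rfl | hj
          · exact hiT'
          · exact hC'.2 j hj
      · rw [if_neg (by rw [hiT]; tauto),
          if_neg (by intro h; exact hiT' (h.2 i (List.mem_cons_self)))]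
      · rw [if_neg (by tauto), if_neg (by intro h; exact hai (h.1 i (List.mem_cons_self)))]
      · rw [if_neg (by tauto), if_neg (by intro h; exact hai (h.1 i (List.mem_cons_self)))]
    · rw [if_neg hC', if_neg (by
        intro ⟨h1, h2⟩
        exact hC' ⟨fun j hj => h1 j (List.mem_cons_of_mem i hj),
          fun j hj => h2 j (List.mem_cons_of_mem i hj)⟩)]
      exact Function.iterate_fixed (by simp) _

lemma iterDeriv_sum (a : Sym2 V →₀ ℕ) {ι : Type*} (S : Finset ι)
    (f : ι → MvPolynomial (Sym2 V) ℝ) :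
    iterDeriv a (∑ s ∈ S, f s) = ∑ s ∈ S, iterDeriv a (f s) := by
  unfold iterDeriv
  induction a.support.toList with
  | nil => simp
  | cons i L ih =>
    simp only [List.foldr_cons]
    rw [ih, iter_pderiv_sum]

lemma iterDeriv_mon (a : Sym2 V →₀ ℕ) (T : Finset (Sym2 V)) (c : ℝ) :
    iterDeriv a (monomial (indic T) c) =
      if (∀ i ∈ a.support, a i = 1) ∧ a.support ⊆ T then monomial (indic (T \ a.support)) c
      else 0 := by
  unfold iterDeriv
  rw [foldr_deriv a _ (Finset.nodup_toList _)
    (fun i hi => Finsupp.mem_support_iff.mp (Finset.mem_toList.mp hi)) T c]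
  rw [Finset.toList_toFinset]
  refine if_congr ?_ rfl rfl
  constructor
  · intro ⟨h1, h2⟩
    exact ⟨fun i hi => h1 i (Finset.mem_toList.mpr hi),
      fun i hi => h2 i (Finset.mem_toList.mpr hi)⟩
  · intro ⟨h1, h2⟩
    exact ⟨fun i hi => h1 i (Finset.mem_toList.mp hi),
      fun i hi => h2 (Finset.mem_toList.mp hi)⟩

section BernoulliExp

variable [Fintype V]

lemma sum_weights (q : ℝ) (U : Finset (Sym2 V)) :
    ∑ S ∈ (Finset.univ : Finset (Sym2 V)).powerset,
      q ^ S.card * (1 - q) ^ (Fintype.card (Sym2 V) - S.card) * (if U ⊆ S then (1:ℝ) else 0)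
      = q ^ U.card := by
  have key := Finset.prod_add (fun _ : Sym2 V => q)
    (fun e => if e ∈ U then (0:ℝ) else (1 - q)) Finset.univ
  have lhs : ∏ e ∈ (Finset.univ : Finset (Sym2 V)), (q + if e ∈ U then (0:ℝ) else (1 - q))
      = q ^ U.card := by
    have h1 : ∀ e, (q + if e ∈ U then (0:ℝ) else (1 - q)) = if e ∈ U then q else 1 := by
      intro e; split <;> ring
    rw [Finset.prod_congr rfl fun e _ => h1 e, Finset.prod_ite_mem,
      Finset.univ_inter, Finset.prod_const]
  rw [lhs] at key
  rw [key]
  refine Finset.sum_congr rfl fun S hS => ?_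
  rw [Finset.prod_const]
  by_cases hU : U ⊆ S
  · have h2 : ∀ e ∈ (Finset.univ : Finset (Sym2 V)) \ S,
        (if e ∈ U then (0:ℝ) else 1 - q) = 1 - q := by
      intro e he
      rw [if_neg (fun h => (Finset.mem_sdiff.mp he).2 (hU h))]
    rw [Finset.prod_congr rfl h2, Finset.prod_const, Finset.card_univ_diff, if_pos hU, mul_one]
  · obtain ⟨e, heU, heS⟩ := Finset.not_subset.mp hU
    rw [if_neg hU, mul_zero]
    have hz : (∏ i ∈ (Finset.univ : Finset (Sym2 V)) \ S, if i ∈ U then (0:ℝ) else 1 - q) = 0 :=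
      Finset.prod_eq_zero (Finset.mem_sdiff.mpr ⟨Finset.mem_univ e, heS⟩) (if_pos heU)
    rw [hz, mul_zero]

lemma bernoulliExp_zero (q : ℝ) : bernoulliExp q (0 : MvPolynomial (Sym2 V) ℝ) = 0 := by
  simp [bernoulliExp]

lemma bernoulliExp_sum (q : ℝ) {ι : Type*} (S : Finset ι) (f : ι → MvPolynomial (Sym2 V) ℝ) :
    bernoulliExp q (∑ s ∈ S, f s) = ∑ s ∈ S, bernoulliExp q (f s) := by
  unfold bernoulliExp
  simp only [map_sum, Finset.mul_sum]
  exact Finset.sum_comm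

lemma bernoulliExp_mon (q : ℝ) (U : Finset (Sym2 V)) (c : ℝ) :
    bernoulliExp q (monomial (indic U) c) = c * q ^ U.card := by
  unfold bernoulliExp
  have heval : ∀ S : Finset (Sym2 V),
      eval (fun e => if e ∈ S then (1:ℝ) else 0) (monomial (indic U) c)
      = c * (if U ⊆ S then 1 else 0) := by
    intro S
    rw [eval_monomial]
    congr 1
    rw [Finsupp.prod, indic_support]
    by_cases h : U ⊆ S
    · rw [if_pos h]
      apply Finset.prod_eq_one
      intro e he
      rw [indic_apply, if_pos he, pow_one, if_pos (h he)]
    · obtain ⟨e, heU, heS⟩ := Finset.not_subset.mp h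
      rw [if_neg h]
      apply Finset.prod_eq_zero heU
      rw [indic_apply, if_pos heU, pow_one, if_neg heS]
  simp only [heval]
  rw [show ∑ S ∈ (Finset.univ : Finset (Sym2 V)).powerset,
        q ^ S.card * (1 - q) ^ (Fintype.card (Sym2 V) - S.card) * (c * if U ⊆ S then (1:ℝ) else 0)
      = c * ∑ S ∈ (Finset.univ : Finset (Sym2 V)).powerset,
        q ^ S.card * (1 - q) ^ (Fintype.card (Sym2 V) - S.card) * (if U ⊆ S then (1:ℝ) else 0) by
    rw [Finset.mul_sum]
    exact Finset.sum_congr rfl fun S _ => by ring]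
  rw [sum_weights]

end BernoulliExp

lemma edgesIn_subset' (F : Finset (Sym2 V)) (s : Finset V) : edgesIn F s ⊆ F :=
  Finset.filter_subset _ _

lemma triple_unique [Fintype V] (G : SimpleGraph V) (e f : Sym2 V) (hef : e ≠ f)
    (s s' : Finset V) (hs : s.card = 3) (hs' : s'.card = 3)
    (he : e ∈ edgesIn G.edgeFinset s) (hf : f ∈ edgesIn G.edgeFinset s)
    (he' : e ∈ edgesIn G.edgeFinset s') (hf' : f ∈ edgesIn G.edgeFinset s') : s = s' := by
  induction e using Sym2.ind with | _ a b => ?_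
  induction f using Sym2.ind with | _ c d => ?_
  simp only [edgesIn, Finset.mem_filter] at he hf he' hf'
  have hab : a ≠ b := by
    have := SimpleGraph.not_isDiag_of_mem_edgeSet G (SimpleGraph.mem_edgeFinset.mp he.1)
    simpa using this
  have hcd : c ≠ d := by
    have := SimpleGraph.not_isDiag_of_mem_edgeSet G (SimpleGraph.mem_edgeFinset.mp hf.1)
    simpa using this
  set W : Finset V := {a, b, c, d} with hW
  have hWcard : 3 ≤ W.card := by
    by_contra h
    push_neg at h
    have h1 : ({a, b} : Finset V) ⊆ W := by
      intro x hx
      simp only [hW, Finset.mem_insert, Finset.mem_singleton] at hx ⊢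
      tauto
    have h2 : ({c, d} : Finset V) ⊆ W := by
      intro x hx
      simp only [hW, Finset.mem_insert, Finset.mem_singleton] at hx ⊢
      tauto
    have e1 : ({a, b} : Finset V) = W :=
      Finset.eq_of_subset_of_card_le h1 (by rw [Finset.card_pair hab]; omega)
    have e2 : ({c, d} : Finset V) = W :=
      Finset.eq_of_subset_of_card_le h2 (by rw [Finset.card_pair hcd]; omega)
    have e3 : ({a, b} : Finset V) = {c, d} := e1.trans e2.symm
    have hc : c = a ∨ c = b := by
      have : c ∈ ({a, b} : Finset V) := e3 ▸ (by simp)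
      simpa using this
    have hd : d = a ∨ d = b := by
      have : d ∈ ({a, b} : Finset V) := e3 ▸ (by simp)
      simpa using this
    simp only [ne_eq, Sym2.eq_iff, not_or, not_and] at hef
    rcases hc with rfl | rfl <;> rcases hd with rfl | rfl <;> tauto
  have hWs : W ⊆ s := by
    intro x hx
    simp only [hW, Finset.mem_insert, Finset.mem_singleton] at hx
    rcases hx with rfl | rfl | rfl | rfl
    · exact he.2 x (Sym2.mem_mk_left x b)
    · exact he.2 x (Sym2.mem_mk_right a x)
    · exact hf.2 x (Sym2.mem_mk_left x d)
    · exact hf.2 x (Sym2.mem_mk_right c x)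
  have hWs' : W ⊆ s' := by
    intro x hx
    simp only [hW, Finset.mem_insert, Finset.mem_singleton] at hx
    rcases hx with rfl | rfl | rfl | rfl
    · exact he'.2 x (Sym2.mem_mk_left x b)
    · exact he'.2 x (Sym2.mem_mk_right a x)
    · exact hf'.2 x (Sym2.mem_mk_left x d)
    · exact hf'.2 x (Sym2.mem_mk_right c x)
  have hsW : W = s := Finset.eq_of_subset_of_card_le hWs (by omega)
  have hsW' : W = s' := Finset.eq_of_subset_of_card_le hWs' (by omega)
  rw [← hsW, ← hsW']

theorem Y3poly_totally_positive_and_bounded {V : Type*} [Fintype V] (G : SimpleGraph V)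
    (hG : G.edgeFinset.Nonempty) (p : ℝ) (hp0 : 0 ≤ p) (hp1 : p ≤ 1)
    (Δ : ℕ) (hΔ : Δ = G.edgeFinset.sup (deltaE G)) :
    TotallyPositive (Y3poly G) ∧
    ∀ a : Sym2 V →₀ ℕ, 1 ≤ ∑ e, a e →
      bernoulliExp p (iterDeriv a (Y3poly G)) ≤ max 1 (p ^ 2 * (Δ : ℝ)) := by
  constructor
  · intro m
    rw [Y3poly, MvPolynomial.coeff_sum]
    apply Finset.sum_nonneg
    intro s _
    rw [prod_X_eq, coeff_monomial]
    split <;> norm_num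
  · intro a ha
    have hY : Y3poly G = ∑ s ∈ triplesWith G 3, monomial (indic (edgesIn G.edgeFinset s)) 1 :=
      Finset.sum_congr rfl fun s _ => prod_X_eq _
    rw [hY, iterDeriv_sum, bernoulliExp_sum]
    by_cases hone : ∀ i ∈ a.support, a i = 1
    case neg =>
      have hz : ∀ s ∈ triplesWith G 3,
          bernoulliExp p (iterDeriv a (monomial (indic (edgesIn G.edgeFinset s)) 1)) = 0 := by
        intro s _
        rw [iterDeriv_mon, if_neg (by tauto), bernoulliExp_zero]
      rw [Finset.sum_congr rfl hz, Finset.sum_const_zero]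
      exact le_max_of_le_left zero_le_one
    case pos =>
      have hterm : ∀ s ∈ triplesWith G 3,
          bernoulliExp p (iterDeriv a (monomial (indic (edgesIn G.edgeFinset s)) 1))
          = if a.support ⊆ edgesIn G.edgeFinset s
            then p ^ ((edgesIn G.edgeFinset s \ a.support).card) else 0 := by
        intro s _
        rw [iterDeriv_mon]
        by_cases h : a.support ⊆ edgesIn G.edgeFinset s
        · rw [if_pos ⟨hone, h⟩, if_pos h, bernoulliExp_mon, one_mul]
        · rw [if_neg (by tauto), if_neg h, bernoulliExp_zero]
      rw [Finset.sum_congr rfl hterm, Finset.sum_ite, Finset.sum_const_zero, add_zero]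
      set M := (triplesWith G 3).filter (fun s => a.support ⊆ edgesIn G.edgeFinset s) with hM
      have hMsub : ∀ s ∈ M, s ∈ triplesWith G 3 ∧ a.support ⊆ edgesIn G.edgeFinset s :=
        fun s hs => Finset.mem_filter.mp hs
      have hcard3 : ∀ s ∈ M, (edgesIn G.edgeFinset s).card = 3 := by
        intro s hs
        exact (Finset.mem_filter.mp (hMsub s hs).1).2
      have hscard3 : ∀ s ∈ M, s.card = 3 := by
        intro s hs
        have := (Finset.mem_filter.mp (hMsub s hs).1).1
        exact (Finset.mem_powersetCard.mp this).2
      have hsupp : a.support.Nonempty := by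
        rcases Finset.eq_empty_or_nonempty a.support with h | h
        · exfalso
          have hz : ∑ e, a e = 0 := Finset.sum_eq_zero fun e _ => by
            by_contra hne
            exact (Finset.eq_empty_iff_forall_notMem.mp h e) (Finsupp.mem_support_iff.mpr hne)
          omega
        · exact h
      rcases eq_or_lt_of_le (show 1 ≤ a.support.card from hsupp.card_pos) with hk1 | hk2
      · -- |support| = 1
        obtain ⟨e, he⟩ := Finset.card_eq_one.mp hk1.symm
        have hsd : ∀ s ∈ M, (edgesIn G.edgeFinset s \ a.support).card = 2 := by
          intro s hs
          rw [Finset.card_sdiff_of_subset (hMsub s hs).2, hcard3 s hs, ← hk1]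
        rw [Finset.sum_congr rfl fun s hs => by rw [hsd s hs]]
        rw [Finset.sum_const, nsmul_eq_mul]
        have hMcard : M.card = deltaE G e := by
          rw [hM, triplesWith, Finset.filter_filter, deltaE]
          congr 1
          apply Finset.filter_congr
          intro s _
          rw [he, Finset.singleton_subset_iff]
        rcases M.eq_empty_or_nonempty with hMe | ⟨s, hsM⟩
        · rw [hMe]
          simp only [Finset.card_empty, Nat.cast_zero, zero_mul]
          exact le_max_of_le_left zero_le_one
        · have heG : e ∈ G.edgeFinset := by
            have h1 : e ∈ edgesIn G.edgeFinset s := (hMsub s hsM).2 (he ▸ Finset.mem_singleton_self e)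
            exact edgesIn_subset' _ _ h1
          have hde : deltaE G e ≤ Δ := hΔ ▸ Finset.le_sup heG
          apply le_max_of_le_right
          rw [hMcard, mul_comm]
          apply mul_le_mul_of_nonneg_left _ (sq_nonneg p)
          exact_mod_cast hde
      · -- |support| ≥ 2
        obtain ⟨e, heS, f, hfS, hef⟩ := Finset.one_lt_card.mp hk2
        have hMcard : M.card ≤ 1 := by
          apply Finset.card_le_one.mpr
          intro s hs s' hs'
          exact triple_unique G e f hef s s' (hscard3 s hs) (hscard3 s' hs')
            ((hMsub s hs).2 heS) ((hMsub s hs).2 hfS)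
            ((hMsub s' hs').2 heS) ((hMsub s' hs').2 hfS)
        apply le_max_of_le_left
        calc ∑ s ∈ M, p ^ (edgesIn G.edgeFinset s \ a.support).card
            ≤ ∑ _s ∈ M, (1:ℝ) := Finset.sum_le_sum fun s _ => pow_le_one₀ hp0 hp1
          _ = M.card := by rw [Finset.sum_const, nsmul_eq_mul, mul_one]
          _ ≤ 1 := by exact_mod_cast hMcard

end ThreeProfile
end
end

section
/- Let 0 < p ≤ 1, ε ≥ 0, and F ⊆ E. Suppose each of the seven quantities Y_0(F), S_1(F), D_1(F), T_1(F), D_2(F), T_2(F), Y_3(F) differs from its expectation (under independent Bernoulli(p) edge sampling) by at most ε times that expectation. Then |X_0(F) − n_0| ≤ ε·(n_0 + 2n_1 + 4n_2 + 8n_3); in particular |X_0(F) − n_0| ≤ 8ε·(n_0 + n_1 + n_2 + n_3). -/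
open Finset

noncomputable section
open scoped Classical

namespace ThreeProfile

variable {V : Type*}

/-- `S₁(F)`: 3-subsets inducing in `G` exactly one edge `e`, with `e ∈ F`. -/
def S1count [Fintype V] (G : SimpleGraph V) (F : Finset (Sym2 V)) : ℕ :=
  ((triples V).filter (fun s => ∃ e ∈ F, edgesIn G.edgeFinset s = {e})).card

/-- `D₁(F)`: pairs `(W, e)` with `W` a 3-subset inducing exactly two edges in `G`
and `e` one of them with `e ∈ F`. -/
def D1count [Fintype V] (G : SimpleGraph V) (F : Finset (Sym2 V)) : ℕ :=
  ∑ s ∈ (triples V).filter (fun s => (edgesIn G.edgeFinset s).card = 2),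
    (edgesIn G.edgeFinset s ∩ F).card

/-- `D₂(F)`: 3-subsets inducing exactly two edges in `G`, both in `F`. -/
def D2count [Fintype V] (G : SimpleGraph V) (F : Finset (Sym2 V)) : ℕ :=
  ((triples V).filter
    (fun s => (edgesIn G.edgeFinset s).card = 2 ∧ edgesIn G.edgeFinset s ⊆ F)).card

/-- `T₁(F)`: pairs `(T, e)` with `T` a triangle of `G` and `e` an edge of `T` with `e ∈ F`. -/
def T1count [Fintype V] (G : SimpleGraph V) (F : Finset (Sym2 V)) : ℕ :=
  ∑ s ∈ (triples V).filter (fun s => (edgesIn G.edgeFinset s).card = 3),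
    (edgesIn G.edgeFinset s ∩ F).card

/-- `T₂(F)`: pairs `(T, {e,f})` with `T` a triangle of `G` and `{e,f}` a pair of
distinct edges of `T` both in `F`. -/
def T2count [Fintype V] (G : SimpleGraph V) (F : Finset (Sym2 V)) : ℕ :=
  ∑ s ∈ (triples V).filter (fun s => (edgesIn G.edgeFinset s).card = 3),
    Nat.choose (edgesIn G.edgeFinset s ∩ F).card 2

lemma edgesIn_subset_eq {F E : Finset (Sym2 V)} (h : F ⊆ E) (s : Finset V) :
    edgesIn F s = F ∩ edgesIn E s := by
  ext e
  simp only [edgesIn, mem_filter, mem_inter]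
  exact ⟨fun ⟨h1, h2⟩ => ⟨h1, h h1, h2⟩, fun ⟨h1, _, h2⟩ => ⟨h1, h2⟩⟩

lemma card_edgesIn_le [Fintype V] (G : SimpleGraph V) {s : Finset V} (hs : s.card = 3) :
    (edgesIn G.edgeFinset s).card ≤ 3 := by
  obtain ⟨a, b, c, hab, hac, hbc, rfl⟩ := Finset.card_eq_three.1 hs
  have hsub : edgesIn G.edgeFinset {a, b, c} ⊆ {s(a,b), s(a,c), s(b,c)} := by
    intro e he
    simp only [edgesIn, mem_filter] at he
    obtain ⟨heE, hmem⟩ := he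
    induction e with
    | _ x y =>
      have hx := hmem x (Sym2.mem_mk_left x y)
      have hy := hmem y (Sym2.mem_mk_right x y)
      have hadj : G.Adj x y := G.mem_edgeSet.1 (SimpleGraph.mem_edgeFinset.1 heE)
      have hxy : x ≠ y := hadj.ne
      simp only [mem_insert, mem_singleton] at hx hy ⊢
      rcases hx with rfl|rfl|rfl <;> rcases hy with rfl|rfl|rfl <;>
        simp_all [Sym2.eq_swap]
  calc (edgesIn G.edgeFinset {a,b,c}).card ≤ ({s(a,b), s(a,c), s(b,c)} : Finset (Sym2 V)).card :=
        card_le_card hsub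
    _ ≤ 3 := by
        refine le_trans (card_insert_le _ _) (Nat.succ_le_succ ?_)
        exact le_trans (card_insert_le _ _) (by simp)

lemma aux_sub {α : Type*} [DecidableEq α] (F A : Finset α) : A ⊆ F ↔ (F ∩ A).card = A.card := by
  constructor
  · intro h; rw [inter_eq_right.2 h]
  · intro h
    rw [← eq_of_subset_of_card_le inter_subset_right h.ge]
    exact inter_subset_left

lemma aux_S1 {α : Type*} [DecidableEq α] (F A : Finset α) :
    (∃ e ∈ F, A = {e}) ↔ (A.card = 1 ∧ (F ∩ A).card = 1) := by
  constructor
  · rintro ⟨e, heF, rfl⟩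
    refine ⟨card_singleton e, ?_⟩
    rw [inter_singleton_of_mem heF]
    exact card_singleton e
  · rintro ⟨hA, hB⟩
    obtain ⟨e, rfl⟩ := card_eq_one.1 hA
    have h2 : ({e} : Finset α) ⊆ F := (aux_sub F {e}).2 (by simpa using hB)
    exact ⟨e, h2 (mem_singleton_self e), rfl⟩

lemma marg {α : Type*} [DecidableEq α] (p : ℝ) (g : Finset α → ℝ) (A : Finset α) :
    ∀ C : Finset α, Disjoint A C →
    ∑ F ∈ (A ∪ C).powerset, p ^ F.card * (1-p) ^ ((A ∪ C).card - F.card) * g (F ∩ A)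
      = ∑ B ∈ A.powerset, p ^ B.card * (1-p) ^ (A.card - B.card) * g B := by
  intro C
  induction C using Finset.induction_on with
  | empty =>
    intro _
    simp only [union_empty]
    exact sum_congr rfl fun B hB => by rw [inter_eq_left.2 (mem_powerset.1 hB)]
  | @insert a C ha ih =>
    intro hd
    have haA : a ∉ A := fun h => disjoint_left.1 hd h (mem_insert_self a C)
    have hd' : Disjoint A C := hd.mono_right (subset_insert _ _)
    have haAC : a ∉ A ∪ C := by simp [haA, ha]
    rw [union_insert, sum_powerset_insert haAC, ← ih hd']
    rw [← sum_add_distrib]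
    apply sum_congr rfl
    intro F hF
    have hFle : F.card ≤ (A ∪ C).card := card_le_card (mem_powerset.1 hF)
    have haF : a ∉ F := fun h => haAC (mem_powerset.1 hF h)
    have h1 : (insert a F) ∩ A = F ∩ A := by
      rw [insert_inter_of_notMem haA]
    rw [h1, card_insert_of_notMem haAC, card_insert_of_notMem haF]
    have h2 : (A ∪ C).card + 1 - F.card = ((A ∪ C).card - F.card) + 1 := by omega
    have h3 : (A ∪ C).card + 1 - (F.card + 1) = (A ∪ C).card - F.card := by omega
    rw [h2, h3]
    ring

lemma expVal_local [Fintype V] (G : SimpleGraph V) (p : ℝ) (g : ℕ → ℕ → ℝ) :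
    expVal G p (fun F => ∑ s ∈ triples V,
        g (edgesIn G.edgeFinset s).card (F ∩ edgesIn G.edgeFinset s).card)
      = ∑ i ∈ range 4, (Ycount G.edgeFinset i : ℝ) *
          ∑ j ∈ range (i+1), (Nat.choose i j : ℝ) * p^j * (1-p)^(i-j) * g i j := by
  unfold expVal
  simp_rw [mul_sum]
  rw [Finset.sum_comm]
  have hstep : ∀ s ∈ triples V,
      ∑ F ∈ G.edgeFinset.powerset,
        p ^ F.card * (1 - p) ^ (G.edgeFinset.card - F.card) *
          g (edgesIn G.edgeFinset s).card (F ∩ edgesIn G.edgeFinset s).card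
      = ∑ j ∈ range ((edgesIn G.edgeFinset s).card + 1),
          (Nat.choose (edgesIn G.edgeFinset s).card j : ℝ) * p^j *
            (1-p)^((edgesIn G.edgeFinset s).card - j) * g (edgesIn G.edgeFinset s).card j := by
    intro s _
    set A := edgesIn G.edgeFinset s with hA
    have hAE : A ⊆ G.edgeFinset := fun e he => by
      simp only [hA, edgesIn, mem_filter] at he; exact he.1
    have hu : A ∪ (G.edgeFinset \ A) = G.edgeFinset := union_sdiff_of_subset hAE
    have hm := marg p (fun B => g A.card B.card) A (G.edgeFinset \ A) disjoint_sdiff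
    rw [hu] at hm
    rw [hm]
    rw [sum_powerset_apply_card (fun j => p ^ j * (1 - p) ^ (A.card - j) * g A.card j)]
    apply sum_congr rfl
    intro j _
    rw [nsmul_eq_mul]
    ring
  rw [sum_congr rfl hstep]
  rw [← sum_fiberwise_of_maps_to (s := triples V) (g := fun s => (edgesIn G.edgeFinset s).card)
      (t := range 4) (fun s hs => mem_range.2
        (Nat.lt_succ_of_le (card_edgesIn_le G (mem_powersetCard.1 hs).2)))]
  apply sum_congr rfl
  intro i _
  have hc : ∀ s ∈ filter (fun s => (edgesIn G.edgeFinset s).card = i) (triples V),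
      (∑ j ∈ range ((edgesIn G.edgeFinset s).card + 1),
          (Nat.choose (edgesIn G.edgeFinset s).card j : ℝ) * p^j *
            (1-p)^((edgesIn G.edgeFinset s).card - j) * g (edgesIn G.edgeFinset s).card j)
      = ∑ j ∈ range (i+1), (Nat.choose i j : ℝ) * p^j * (1-p)^(i-j) * g i j := by
    intro s hs
    rw [(mem_filter.1 hs).2]
  rw [sum_congr rfl hc, sum_const, nsmul_eq_mul, ← mul_sum]
  congr 1

variable [Fintype V]

lemma Ycount_eq (G : SimpleGraph V) {F : Finset (Sym2 V)} (hF : F ⊆ G.edgeFinset) (i : ℕ) :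
    (Ycount F i : ℝ) = ∑ s ∈ triples V,
      (if (F ∩ edgesIn G.edgeFinset s).card = i then (1:ℝ) else 0) := by
  rw [Ycount, card_filter]
  push_cast
  refine sum_congr rfl fun s _ => ?_
  rw [edgesIn_subset_eq hF]

lemma S1_eq (G : SimpleGraph V) (F : Finset (Sym2 V)) :
    (S1count G F : ℝ) = ∑ s ∈ triples V,
      (if (edgesIn G.edgeFinset s).card = 1 ∧ (F ∩ edgesIn G.edgeFinset s).card = 1
        then (1:ℝ) else 0) := by
  rw [S1count, card_filter]
  push_cast
  refine sum_congr rfl fun s _ => ?_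
  by_cases h : ∃ e ∈ F, edgesIn G.edgeFinset s = {e}
  · rw [if_pos h, if_pos ((aux_S1 _ _).1 h)]
  · rw [if_neg h, if_neg (fun hc => h ((aux_S1 _ _).2 hc))]

lemma D1_eq (G : SimpleGraph V) (F : Finset (Sym2 V)) :
    (D1count G F : ℝ) = ∑ s ∈ triples V,
      (if (edgesIn G.edgeFinset s).card = 2
        then ((F ∩ edgesIn G.edgeFinset s).card : ℝ) else 0) := by
  rw [D1count]
  push_cast
  rw [sum_filter]
  exact sum_congr rfl fun s _ => by rw [inter_comm]

lemma T1_eq (G : SimpleGraph V) (F : Finset (Sym2 V)) :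
    (T1count G F : ℝ) = ∑ s ∈ triples V,
      (if (edgesIn G.edgeFinset s).card = 3
        then ((F ∩ edgesIn G.edgeFinset s).card : ℝ) else 0) := by
  rw [T1count]
  push_cast
  rw [sum_filter]
  exact sum_congr rfl fun s _ => by rw [inter_comm]

lemma T2_eq (G : SimpleGraph V) (F : Finset (Sym2 V)) :
    (T2count G F : ℝ) = ∑ s ∈ triples V,
      (if (edgesIn G.edgeFinset s).card = 3
        then ((Nat.choose (F ∩ edgesIn G.edgeFinset s).card 2 : ℝ)) else 0) := by
  rw [T2count]
  push_cast
  rw [sum_filter]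
  exact sum_congr rfl fun s _ => by rw [inter_comm]

lemma D2_eq (G : SimpleGraph V) (F : Finset (Sym2 V)) :
    (D2count G F : ℝ) = ∑ s ∈ triples V,
      (if (edgesIn G.edgeFinset s).card = 2 ∧ (F ∩ edgesIn G.edgeFinset s).card = 2
        then (1:ℝ) else 0) := by
  rw [D2count, card_filter]
  push_cast
  refine sum_congr rfl fun s _ => ?_
  by_cases h : (edgesIn G.edgeFinset s).card = 2 ∧ edgesIn G.edgeFinset s ⊆ F
  · rw [if_pos h, if_pos ⟨h.1, by rw [(aux_sub F _).1 h.2, h.1]⟩]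
  · rw [if_neg h, if_neg (fun hc => h ⟨hc.1, (aux_sub F _).2 (by rw [hc.2, hc.1])⟩)]

lemma expVal_congr (G : SimpleGraph V) (p : ℝ) {f g : Finset (Sym2 V) → ℝ}
    (h : ∀ F ∈ G.edgeFinset.powerset, f F = g F) : expVal G p f = expVal G p g :=
  sum_congr rfl fun F hF => by rw [h F hF]

lemma exp_Y0 (G : SimpleGraph V) (p : ℝ) :
    expVal G p (fun F' => (Ycount F' 0 : ℝ))
      = (Ycount G.edgeFinset 0 : ℝ) + (1-p) * Ycount G.edgeFinset 1
        + (1-p)^2 * Ycount G.edgeFinset 2 + (1-p)^3 * Ycount G.edgeFinset 3 := by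
  rw [expVal_congr G p (fun F hF => Ycount_eq G (mem_powerset.1 hF) 0),
    expVal_local G p (fun _ j => if j = 0 then (1:ℝ) else 0)]
  norm_num [Finset.sum_range_succ]
  ring

lemma exp_Y3 (G : SimpleGraph V) (p : ℝ) :
    expVal G p (fun F' => (Ycount F' 3 : ℝ)) = p^3 * Ycount G.edgeFinset 3 := by
  rw [expVal_congr G p (fun F hF => Ycount_eq G (mem_powerset.1 hF) 3),
    expVal_local G p (fun _ j => if j = 3 then (1:ℝ) else 0)]
  norm_num [Finset.sum_range_succ]
  ring

lemma exp_S1 (G : SimpleGraph V) (p : ℝ) :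
    expVal G p (fun F' => (S1count G F' : ℝ)) = p * Ycount G.edgeFinset 1 := by
  rw [expVal_congr G p (fun F _ => S1_eq G F),
    expVal_local G p (fun k j => if k = 1 ∧ j = 1 then (1:ℝ) else 0)]
  norm_num [Finset.sum_range_succ]
  ring

lemma exp_D1 (G : SimpleGraph V) (p : ℝ) :
    expVal G p (fun F' => (D1count G F' : ℝ)) = 2 * p * Ycount G.edgeFinset 2 := by
  rw [expVal_congr G p (fun F _ => D1_eq G F),
    expVal_local G p (fun k j => if k = 2 then (j:ℝ) else 0)]
  norm_num [Finset.sum_range_succ]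
  ring

lemma exp_T1 (G : SimpleGraph V) (p : ℝ) :
    expVal G p (fun F' => (T1count G F' : ℝ)) = 3 * p * Ycount G.edgeFinset 3 := by
  rw [expVal_congr G p (fun F _ => T1_eq G F),
    expVal_local G p (fun k j => if k = 3 then (j:ℝ) else 0)]
  norm_num [Finset.sum_range_succ]
  ring

lemma exp_T2 (G : SimpleGraph V) (p : ℝ) :
    expVal G p (fun F' => (T2count G F' : ℝ)) = 3 * p^2 * Ycount G.edgeFinset 3 := by
  rw [expVal_congr G p (fun F _ => T2_eq G F),
    expVal_local G p (fun k j => if k = 3 then ((Nat.choose j 2 : ℕ):ℝ) else 0)]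
  norm_num [Finset.sum_range_succ]
  ring

lemma exp_D2 (G : SimpleGraph V) (p : ℝ) :
    expVal G p (fun F' => (D2count G F' : ℝ)) = p^2 * Ycount G.edgeFinset 2 := by
  rw [expVal_congr G p (fun F _ => D2_eq G F),
    expVal_local G p (fun k j => if k = 2 ∧ j = 2 then (1:ℝ) else 0)]
  norm_num [Finset.sum_range_succ]
  ring

lemma comb1 (G : SimpleGraph V) {F : Finset (Sym2 V)} (hF : F ⊆ G.edgeFinset) :
    (Ycount F 1 : ℝ) + 2*(D2count G F : ℝ) + 2*(T2count G F : ℝ)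
      = (S1count G F : ℝ) + (D1count G F : ℝ) + (T1count G F : ℝ) + 3*(Ycount F 3 : ℝ) := by
  rw [Ycount_eq G hF 1, Ycount_eq G hF 3, S1_eq, D1_eq, T1_eq, D2_eq, T2_eq]
  simp only [mul_sum, ← sum_add_distrib]
  apply sum_congr rfl
  intro s hs
  have hk : (edgesIn G.edgeFinset s).card ≤ 3 :=
    card_edgesIn_le G (mem_powersetCard.1 hs).2
  have hj : (F ∩ edgesIn G.edgeFinset s).card ≤ (edgesIn G.edgeFinset s).card :=
    card_le_card inter_subset_right
  set k := (edgesIn G.edgeFinset s).card with hkdef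
  set j := (F ∩ edgesIn G.edgeFinset s).card with hjdef
  clear_value k j
  interval_cases k <;> interval_cases j <;> norm_num [Nat.choose]

lemma comb2 (G : SimpleGraph V) {F : Finset (Sym2 V)} (hF : F ⊆ G.edgeFinset) :
    (Ycount F 2 : ℝ) + 3*(Ycount F 3 : ℝ) = (D2count G F : ℝ) + (T2count G F : ℝ) := by
  rw [Ycount_eq G hF 2, Ycount_eq G hF 3, D2_eq, T2_eq]
  simp only [mul_sum, ← sum_add_distrib]
  apply sum_congr rfl
  intro s hs
  have hk : (edgesIn G.edgeFinset s).card ≤ 3 :=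
    card_edgesIn_le G (mem_powersetCard.1 hs).2
  have hj : (F ∩ edgesIn G.edgeFinset s).card ≤ (edgesIn G.edgeFinset s).card :=
    card_le_card inter_subset_right
  set k := (edgesIn G.edgeFinset s).card with hkdef
  set j := (F ∩ edgesIn G.edgeFinset s).card with hjdef
  clear_value k j
  interval_cases k <;> interval_cases j <;> norm_num [Nat.choose]

set_option maxHeartbeats 1000000 in
theorem X0_deviation {V : Type*} [Fintype V] (G : SimpleGraph V)
    (p : ℝ) (hp : 0 < p) (hp1 : p ≤ 1) (ε : ℝ) (hε : 0 ≤ ε)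
    (F : Finset (Sym2 V)) (hF : F ⊆ G.edgeFinset) (n : ℕ → ℕ)
    (hn : ∀ i, n i = Ycount G.edgeFinset i)
    (hY0 : |(Ycount F 0 : ℝ) - expVal G p (fun F' => (Ycount F' 0 : ℝ))|
      ≤ ε * expVal G p (fun F' => (Ycount F' 0 : ℝ)))
    (hS1 : |(S1count G F : ℝ) - expVal G p (fun F' => (S1count G F' : ℝ))|
      ≤ ε * expVal G p (fun F' => (S1count G F' : ℝ)))
    (hD1 : |(D1count G F : ℝ) - expVal G p (fun F' => (D1count G F' : ℝ))|
      ≤ ε * expVal G p (fun F' => (D1count G F' : ℝ)))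
    (hT1 : |(T1count G F : ℝ) - expVal G p (fun F' => (T1count G F' : ℝ))|
      ≤ ε * expVal G p (fun F' => (T1count G F' : ℝ)))
    (hD2 : |(D2count G F : ℝ) - expVal G p (fun F' => (D2count G F' : ℝ))|
      ≤ ε * expVal G p (fun F' => (D2count G F' : ℝ)))
    (hT2 : |(T2count G F : ℝ) - expVal G p (fun F' => (T2count G F' : ℝ))|
      ≤ ε * expVal G p (fun F' => (T2count G F' : ℝ)))
    (hY3 : |(Ycount F 3 : ℝ) - expVal G p (fun F' => (Ycount F' 3 : ℝ))|
      ≤ ε * expVal G p (fun F' => (Ycount F' 3 : ℝ))) :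
    |Xest p 0 F - n 0| ≤ ε * (n 0 + 2 * n 1 + 4 * n 2 + 8 * n 3) ∧
    |Xest p 0 F - n 0| ≤ 8 * ε * (n 0 + n 1 + n 2 + n 3) := by
  have hp' : p ≠ 0 := ne_of_gt hp
  have hq0 : (0:ℝ) ≤ 1 - p := by linarith
  rw [exp_Y0 G p] at hY0
  rw [exp_S1 G p] at hS1
  rw [exp_D1 G p] at hD1
  rw [exp_T1 G p] at hT1
  rw [exp_D2 G p] at hD2
  rw [exp_T2 G p] at hT2
  rw [exp_Y3 G p] at hY3
  simp only [hn]
  set N0 := (Ycount G.edgeFinset 0 : ℝ) with hN0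
  set N1 := (Ycount G.edgeFinset 1 : ℝ) with hN1
  set N2 := (Ycount G.edgeFinset 2 : ℝ) with hN2
  set N3 := (Ycount G.edgeFinset 3 : ℝ) with hN3
  have hN0' : 0 ≤ N0 := Nat.cast_nonneg _
  have hN1' : 0 ≤ N1 := Nat.cast_nonneg _
  have hN2' : 0 ≤ N2 := Nat.cast_nonneg _
  have hN3' : 0 ≤ N3 := Nat.cast_nonneg _
  have h1 := comb1 G hF
  have h2 := comb2 G hF
  have e1 : (Ycount F 1 : ℝ) = (S1count G F : ℝ) + (D1count G F : ℝ) + (T1count G F : ℝ)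
      + 3*(Ycount F 3 : ℝ) - 2*(D2count G F : ℝ) - 2*(T2count G F : ℝ) := by
    linarith only [h1]
  have e2 : (Ycount F 2 : ℝ) = (D2count G F : ℝ) + (T2count G F : ℝ)
      - 3*(Ycount F 3 : ℝ) := by linarith only [h2]
  set c1 := (1-p)/p with hc1
  set c2 := 2*(1-p)/p + (1-p)^2/p^2 with hc2
  set c3 := 3*(1-p)/p + 3*(1-p)^2/p^2 + (1-p)^3/p^3 with hc3
  have mc1 : 0 ≤ c1 := by positivity
  have mc2 : 0 ≤ c2 := by positivity
  have mc3 : 0 ≤ c3 := by positivity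
  have key : Xest p 0 F - N0 =
      ((Ycount F 0 : ℝ) - (N0 + (1-p)*N1 + (1-p)^2*N2 + (1-p)^3*N3))
      - c1 * (((S1count G F : ℝ) - p*N1) + ((D1count G F : ℝ) - 2*p*N2)
              + ((T1count G F : ℝ) - 3*p*N3))
      + c2 * (((D2count G F : ℝ) - p^2*N2) + ((T2count G F : ℝ) - 3*p^2*N3))
      - c3 * ((Ycount F 3 : ℝ) - p^3*N3) := by
    simp only [Xest, hc1, hc2, hc3]
    rw [e1, e2]
    field_simp
    ring
  have bY0 := abs_le.1 hY0
  have bS1 := abs_le.1 hS1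
  have bD1 := abs_le.1 hD1
  have bT1 := abs_le.1 hT1
  have bD2 := abs_le.1 hD2
  have bT2 := abs_le.1 hT2
  have bY3 := abs_le.1 hY3
  have u1 : c1 * (((S1count G F : ℝ) - p*N1) + ((D1count G F : ℝ) - 2*p*N2)
      + ((T1count G F : ℝ) - 3*p*N3)) ≤ c1 * (ε*(p*N1) + ε*(2*p*N2) + ε*(3*p*N3)) :=
    mul_le_mul_of_nonneg_left (by linarith only [bS1.2, bD1.2, bT1.2]) mc1
  have l1 : c1 * (-(ε*(p*N1) + ε*(2*p*N2) + ε*(3*p*N3))) ≤ c1 * (((S1count G F : ℝ) - p*N1)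
      + ((D1count G F : ℝ) - 2*p*N2) + ((T1count G F : ℝ) - 3*p*N3)) :=
    mul_le_mul_of_nonneg_left (by linarith only [bS1.1, bD1.1, bT1.1]) mc1
  have u2 : c2 * (((D2count G F : ℝ) - p^2*N2) + ((T2count G F : ℝ) - 3*p^2*N3))
      ≤ c2 * (ε*(p^2*N2) + ε*(3*p^2*N3)) :=
    mul_le_mul_of_nonneg_left (by linarith only [bD2.2, bT2.2]) mc2
  have l2 : c2 * (-(ε*(p^2*N2) + ε*(3*p^2*N3)))
      ≤ c2 * (((D2count G F : ℝ) - p^2*N2) + ((T2count G F : ℝ) - 3*p^2*N3)) :=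
    mul_le_mul_of_nonneg_left (by linarith only [bD2.1, bT2.1]) mc2
  have u3 : c3 * ((Ycount F 3 : ℝ) - p^3*N3) ≤ c3 * (ε*(p^3*N3)) :=
    mul_le_mul_of_nonneg_left (by linarith only [bY3.2]) mc3
  have l3 : c3 * (-(ε*(p^3*N3))) ≤ c3 * ((Ycount F 3 : ℝ) - p^3*N3) :=
    mul_le_mul_of_nonneg_left (by linarith only [bY3.1]) mc3
  have hup : Xest p 0 F - N0 ≤
      ε * (N0 + (1-p)*N1 + (1-p)^2*N2 + (1-p)^3*N3)
      + c1 * (ε*(p*N1) + ε*(2*p*N2) + ε*(3*p*N3))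
      + c2 * (ε*(p^2*N2) + ε*(3*p^2*N3))
      + c3 * (ε*(p^3*N3)) := by
    rw [key]; linarith only [bY0.2, l1, u2, l3]
  have hlow : -(ε * (N0 + (1-p)*N1 + (1-p)^2*N2 + (1-p)^3*N3)
      + c1 * (ε*(p*N1) + ε*(2*p*N2) + ε*(3*p*N3))
      + c2 * (ε*(p^2*N2) + ε*(3*p^2*N3))
      + c3 * (ε*(p^3*N3))) ≤ Xest p 0 F - N0 := by
    rw [key]; linarith only [bY0.1, u1, l2, u3]
  have habs : |Xest p 0 F - N0| ≤
      ε * (N0 + (1-p)*N1 + (1-p)^2*N2 + (1-p)^3*N3)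
      + c1 * (ε*(p*N1) + ε*(2*p*N2) + ε*(3*p*N3))
      + c2 * (ε*(p^2*N2) + ε*(3*p^2*N3))
      + c3 * (ε*(p^3*N3)) := abs_le.2 ⟨hlow, hup⟩
  have hBB : ε * (N0 + (1-p)*N1 + (1-p)^2*N2 + (1-p)^3*N3)
      + c1 * (ε*(p*N1) + ε*(2*p*N2) + ε*(3*p*N3))
      + c2 * (ε*(p^2*N2) + ε*(3*p^2*N3))
      + c3 * (ε*(p^3*N3))
      = ε * (N0 + 2*(1-p)*N1 + 4*(1-p)*N2 + (8 - 6*p - 2*p^3)*N3) := by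
    simp only [hc1, hc2, hc3]
    field_simp
    ring
  rw [hBB] at habs
  have hfin : ε * (N0 + 2*(1-p)*N1 + 4*(1-p)*N2 + (8 - 6*p - 2*p^3)*N3)
      ≤ ε * (N0 + 2*N1 + 4*N2 + 8*N3) := by
    apply mul_le_mul_of_nonneg_left _ hε
    have t1 : 2*(1-p)*N1 ≤ 2*N1 := by linarith only [mul_nonneg hp.le hN1']
    have t2 : 4*(1-p)*N2 ≤ 4*N2 := by linarith only [mul_nonneg hp.le hN2']
    have t3 : (8 - 6*p - 2*p^3)*N3 ≤ 8*N3 := by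
      linarith only [mul_nonneg hp.le hN3', mul_nonneg (pow_nonneg hp.le 3) hN3']
    linarith only [t1, t2, t3]
  constructor
  · linarith only [habs, hfin]
  · have h8 : ε * (N0 + 2*N1 + 4*N2 + 8*N3) ≤ 8 * ε * (N0 + N1 + N2 + N3) := by
      linarith only [mul_nonneg hε hN0', mul_nonneg hε hN1', mul_nonneg hε hN2']
    linarith only [habs, hfin, h8]

  

end ThreeProfile
end
end

section
/- (First edge pivot equation) For every vertex v of G, Σ_{a ∈ Γ(v)} C(c_{v,a}, 2) = 3·F_0(v) + F_1(v), where c_{v,a} = |Γ(v) \ (Γ(a) ∪ {a})| is the number of neighbors of v other than a that are not adjacent to a, and C(·,2) is the binomial coefficient. -/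
open Finset

noncomputable section
open scoped Classical

namespace ThreeProfile

variable {V : Type*}

/-- Ego 3-profile count: 3-subsets of the neighborhood of `v` inducing exactly `i`
edges of `G`. -/
def egoCount [Fintype V] (G : SimpleGraph V) (v : V) (i : ℕ) : ℕ :=
  (((G.neighborFinset v).powersetCard 3).filter
    (fun s => (edgesIn G.edgeFinset s).card = i)).card

/-- `c_{v,a}`: neighbors of `v` other than `a` that are not adjacent to `a`. -/
def cva [Fintype V] (G : SimpleGraph V) (v a : V) : ℕ :=
  (G.neighborFinset v \ insert a (G.neighborFinset a)).card

lemma edgesIn_triple [Fintype V] (G : SimpleGraph V) (x y z : V)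
    (hxy : x ≠ y) (hxz : x ≠ z) (hyz : y ≠ z) :
    edgesIn G.edgeFinset ({x, y, z} : Finset V)
      = ({s(x,y), s(x,z), s(y,z)} : Finset (Sym2 V)).filter (fun e => e ∈ G.edgeFinset) := by
  ext e
  induction e using Sym2.ind with
  | _ u w =>
    simp only [edgesIn, mem_filter, SimpleGraph.mem_edgeFinset, mem_insert, mem_singleton,
      Sym2.mem_iff, forall_eq_or_imp, forall_eq, Sym2.eq_iff, SimpleGraph.mem_edgeSet]
    constructor
    · rintro ⟨hadj, ⟨hu, hw⟩⟩
      have hne : u ≠ w := G.ne_of_adj hadj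
      refine ⟨?_, hadj⟩
      rcases hu with rfl | rfl | rfl <;> rcases hw with rfl | rfl | rfl <;> tauto
    · rintro ⟨h, hadj⟩
      refine ⟨hadj, ?_⟩
      rcases h with ⟨rfl, rfl⟩ | ⟨rfl, rfl⟩ | (⟨rfl, rfl⟩ | ⟨rfl, rfl⟩) | (⟨rfl, rfl⟩ | ⟨rfl, rfl⟩) <;> tauto

lemma pointwise [Fintype V] (G : SimpleGraph V) (x y z : V)
    (hxy : x ≠ y) (hxz : x ≠ z) (hyz : y ≠ z) :
    (({x, y, z} : Finset V).filter (fun a => ∀ b ∈ ({x, y, z} : Finset V), b ≠ a → ¬ G.Adj a b)).card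
      = 3 * (if (edgesIn G.edgeFinset ({x, y, z} : Finset V)).card = 0 then 1 else 0)
        + (if (edgesIn G.edgeFinset ({x, y, z} : Finset V)).card = 1 then 1 else 0) := by
  rw [edgesIn_triple G x y z hxy hxz hyz]
  have d1 : (s(x,y) : Sym2 V) ≠ s(x,z) := by simp [Sym2.eq_iff]; tauto
  have d2 : (s(x,y) : Sym2 V) ≠ s(y,z) := by simp [Sym2.eq_iff]; tauto
  have d3 : (s(x,z) : Sym2 V) ≠ s(y,z) := by simp [Sym2.eq_iff]; tauto
  have hcard : (({s(x,y), s(x,z), s(y,z)} : Finset (Sym2 V)).filter (fun e => e ∈ G.edgeFinset)).card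
      = (if G.Adj x y then 1 else 0) + (if G.Adj x z then 1 else 0) + (if G.Adj y z then 1 else 0) := by
    rw [filter_insert, filter_insert, filter_singleton]
    simp only [SimpleGraph.mem_edgeFinset, SimpleGraph.mem_edgeSet]
    by_cases h1 : G.Adj x y <;> by_cases h2 : G.Adj x z <;> by_cases h3 : G.Adj y z <;>
      simp [h1, h2, h3, d1, d2, d3]
  have hfil : (({x, y, z} : Finset V).filter (fun a => ∀ b ∈ ({x, y, z} : Finset V), b ≠ a → ¬ G.Adj a b)).card
      = (if ¬ G.Adj x y ∧ ¬ G.Adj x z then 1 else 0)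
        + (if ¬ G.Adj x y ∧ ¬ G.Adj y z then 1 else 0)
        + (if ¬ G.Adj x z ∧ ¬ G.Adj y z then 1 else 0) := by
    rw [filter_insert, filter_insert, filter_singleton]
    have gx : (∀ b ∈ ({x, y, z} : Finset V), b ≠ x → ¬ G.Adj x b) ↔ (¬ G.Adj x y ∧ ¬ G.Adj x z) := by
      simp [hxy.symm, hxz.symm]
    have gy : (∀ b ∈ ({x, y, z} : Finset V), b ≠ y → ¬ G.Adj y b) ↔ (¬ G.Adj x y ∧ ¬ G.Adj y z) := by
      simp [hxy, hyz.symm, G.adj_comm y x]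
    have gz : (∀ b ∈ ({x, y, z} : Finset V), b ≠ z → ¬ G.Adj z b) ↔ (¬ G.Adj x z ∧ ¬ G.Adj y z) := by
      simp [hxz, hyz, G.adj_comm z x, G.adj_comm z y]
    simp only [gx, gy, gz]
    by_cases h1 : G.Adj x y <;> by_cases h2 : G.Adj x z <;> by_cases h3 : G.Adj y z <;>
      simp [h1, h2, h3, hxy, hxz, hyz]
  rw [hcard, hfil]
  by_cases h1 : G.Adj x y <;> by_cases h2 : G.Adj x z <;> by_cases h3 : G.Adj y z <;>
    simp [h1, h2, h3]

theorem first_edge_pivot {V : Type*} [Fintype V] (G : SimpleGraph V) (v : V) :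
    ∑ a ∈ G.neighborFinset v, Nat.choose (cva G v a) 2
      = 3 * egoCount G v 0 + egoCount G v 1 := by
  classical
  set N := G.neighborFinset v with hN
  have key : ∑ a ∈ N, Nat.choose (cva G v a) 2
      = ∑ s ∈ N.powersetCard 3,
          (s.filter (fun a => ∀ b ∈ s, b ≠ a → ¬ G.Adj a b)).card := by
    have lhs : ∑ a ∈ N, Nat.choose (cva G v a) 2
        = ∑ a ∈ N, ((N \ insert a (G.neighborFinset a)).powersetCard 2).card := by
      refine Finset.sum_congr rfl fun a _ => ?_
      rw [Finset.card_powersetCard, cva]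
    rw [lhs, ← Finset.card_sigma, ← Finset.card_sigma]
    refine Finset.card_bij (fun p _ => (⟨insert p.1 p.2, p.1⟩ : Σ _ : Finset V, V)) ?_ ?_ ?_
    · rintro ⟨a, t⟩ hp
      rw [Finset.mem_sigma] at hp
      obtain ⟨ha, ht⟩ := hp
      rw [Finset.mem_powersetCard] at ht
      obtain ⟨htsub, htcard⟩ := ht
      have hat : a ∉ t := fun h => by
        have := htsub h
        rw [Finset.mem_sdiff] at this
        exact this.2 (Finset.mem_insert_self a _)
      rw [Finset.mem_sigma, Finset.mem_powersetCard]
      refine ⟨⟨?_, ?_⟩, ?_⟩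
      · exact Finset.insert_subset ha (htsub.trans Finset.sdiff_subset)
      · rw [Finset.card_insert_of_notMem hat, htcard]
      · rw [Finset.mem_filter]
        refine ⟨Finset.mem_insert_self _ _, ?_⟩
        intro b hb hba
        rcases Finset.mem_insert.mp hb with rfl | hbt
        · exact absurd rfl hba
        · have := htsub hbt
          rw [Finset.mem_sdiff, Finset.mem_insert] at this
          intro hadj
          exact this.2 (Or.inr ((G.mem_neighborFinset a b).mpr hadj))
    · rintro ⟨a, t⟩ hp ⟨a', t'⟩ hp' heq
      rw [Finset.mem_sigma, Finset.mem_powersetCard] at hp hp'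
      have hat : a ∉ t := fun h => by
        have := hp.2.1 h
        rw [Finset.mem_sdiff] at this
        exact this.2 (Finset.mem_insert_self a _)
      have hat' : a' ∉ t' := fun h => by
        have := hp'.2.1 h
        rw [Finset.mem_sdiff] at this
        exact this.2 (Finset.mem_insert_self a' _)
      obtain ⟨h1, h2⟩ := Sigma.mk.inj_iff.mp heq
      have ha : a = a' := by exact_mod_cast eq_of_heq h2
      subst ha
      have ht : t = t' := by
        have := congrArg (Finset.erase · a) h1
        simpa [Finset.erase_insert hat, Finset.erase_insert hat'] using this
      simp [ht]
    · rintro ⟨s, a⟩ hq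
      rw [Finset.mem_sigma, Finset.mem_powersetCard, Finset.mem_filter] at hq
      obtain ⟨⟨hsub, hcard⟩, has, hgood⟩ := hq
      refine ⟨⟨a, s.erase a⟩, ?_, ?_⟩
      · rw [Finset.mem_sigma, Finset.mem_powersetCard]
        refine ⟨hsub has, ?_, ?_⟩
        · intro b hb
          rw [Finset.mem_erase] at hb
          rw [Finset.mem_sdiff, Finset.mem_insert]
          refine ⟨hsub hb.2, ?_⟩
          rintro (rfl | hbn)
          · exact hb.1 rfl
          · exact hgood b hb.2 hb.1 ((G.mem_neighborFinset a b).mp hbn)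
        · rw [Finset.card_erase_of_mem has, hcard]
      · simp [Finset.insert_erase has]
  rw [key]
  have step2 : ∀ s ∈ N.powersetCard 3,
      (s.filter (fun a => ∀ b ∈ s, b ≠ a → ¬ G.Adj a b)).card
        = 3 * (if (edgesIn G.edgeFinset s).card = 0 then 1 else 0)
          + (if (edgesIn G.edgeFinset s).card = 1 then 1 else 0) := by
    intro s hs
    rw [Finset.mem_powersetCard] at hs
    obtain ⟨x, y, z, hxy, hxz, hyz, rfl⟩ := Finset.card_eq_three.mp hs.2
    exact pointwise G x y z hxy hxz hyz
  rw [Finset.sum_congr rfl step2, Finset.sum_add_distrib, ← Finset.mul_sum]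
  congr 1
  · rw [egoCount, Finset.card_filter]
  · rw [egoCount, Finset.card_filter]

end ThreeProfile
end
end

section
/- (Second edge pivot equation) For every vertex v of G, Σ_{a ∈ Γ(v)} C(|Γ(v) ∩ Γ(a)|, 2) = F_2(v) + 3·F_3(v), where C(·,2) is the binomial coefficient. -/
open Finset

noncomputable section
open scoped Classical

namespace ThreeProfile

variable {V : Type*}

lemma edgesIn_three [Fintype V] (G : SimpleGraph V) (x y z : V) :
    edgesIn G.edgeFinset {x, y, z}
      = ({s(x,y), s(x,z), s(y,z)} : Finset (Sym2 V)).filter (· ∈ G.edgeFinset) := by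
  ext e
  induction e with
  | _ u w =>
    simp only [edgesIn, mem_filter, SimpleGraph.mem_edgeFinset, Sym2.mem_iff, mem_insert,
      mem_singleton]
    constructor
    · rintro ⟨hadj, h⟩
      have hu := h u (by left; rfl)
      have hw := h w (by right; rfl)
      have hne : u ≠ w := hadj.ne
      refine ⟨?_, hadj⟩
      rcases hu with rfl | rfl | rfl <;> rcases hw with rfl | rfl | rfl <;>
        simp_all [Sym2.eq_iff]
    · rintro ⟨h, hadj⟩
      refine ⟨hadj, ?_⟩
      intro t ht
      rcases h with h | h | h <;> rw [Sym2.eq_iff] at h <;>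
        rcases ht with rfl | rfl <;>
        rcases h with ⟨rfl, rfl⟩ | ⟨rfl, rfl⟩ <;> simp

lemma key [Fintype V] (G : SimpleGraph V) (s : Finset V) (hs : s.card = 3) :
    (s.filter (fun a => ∀ b ∈ s, b ≠ a → G.Adj a b)).card
      = (if (edgesIn G.edgeFinset s).card = 2 then 1 else 0)
        + 3 * (if (edgesIn G.edgeFinset s).card = 3 then 1 else 0) := by
  obtain ⟨x, y, z, hxy, hxz, hyz, rfl⟩ := Finset.card_eq_three.mp hs
  rw [edgesIn_three]
  have hxy' := hxy.symm; have hxz' := hxz.symm; have hyz' := hyz.symm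
  have c1 := G.adj_comm x y; have c2 := G.adj_comm x z; have c3 := G.adj_comm y z
  by_cases h1 : G.Adj x y <;> by_cases h2 : G.Adj x z <;> by_cases h3 : G.Adj y z <;>
    simp_all [Finset.filter_insert, Finset.filter_singleton, Sym2.eq_iff,
      SimpleGraph.mem_edgeFinset, Finset.card_insert_of_notMem]

theorem second_edge_pivot {V : Type*} [Fintype V] (G : SimpleGraph V) (v : V) :
    ∑ a ∈ G.neighborFinset v,
        Nat.choose (G.neighborFinset v ∩ G.neighborFinset a).card 2
      = egoCount G v 2 + 3 * egoCount G v 3 := by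
  classical
  set N := G.neighborFinset v with hN
  calc ∑ a ∈ N, Nat.choose (N ∩ G.neighborFinset a).card 2
      = ∑ a ∈ N, ((N ∩ G.neighborFinset a).powersetCard 2).card := by
        simp [Finset.card_powersetCard]
    _ = (N.sigma (fun a => (N ∩ G.neighborFinset a).powersetCard 2)).card :=
        (Finset.card_sigma _ _).symm
    _ = ((N.powersetCard 3).sigma
          (fun s => s.filter (fun a => ∀ b ∈ s, b ≠ a → G.Adj a b))).card := by
        refine Finset.card_bij (fun x _ => ⟨insert x.1 x.2, x.1⟩) ?_ ?_ ?_
        · rintro ⟨a, p⟩ hx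
          simp only [Finset.mem_sigma, Finset.mem_powersetCard] at hx ⊢
          obtain ⟨ha, hp, hcard⟩ := hx
          have hanp : a ∉ p := by
            intro h
            have := (Finset.mem_inter.mp (hp h)).2
            rw [SimpleGraph.mem_neighborFinset] at this
            exact G.irrefl this
          refine ⟨⟨?_, ?_⟩, ?_⟩
          · intro b hb
            rcases Finset.mem_insert.mp hb with rfl | hb
            · exact ha
            · exact (Finset.mem_inter.mp (hp hb)).1
          · rw [Finset.card_insert_of_notMem hanp, hcard]
          · rw [Finset.mem_filter]
            refine ⟨Finset.mem_insert_self _ _, ?_⟩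
            intro b hb hba
            rcases Finset.mem_insert.mp hb with rfl | hb
            · exact absurd rfl hba
            · have := (Finset.mem_inter.mp (hp hb)).2
              rw [SimpleGraph.mem_neighborFinset] at this
              exact this
        · rintro ⟨a, p⟩ h1 ⟨a', p'⟩ h2 heq
          simp only [Finset.mem_sigma, Finset.mem_powersetCard] at h1 h2
          obtain ⟨hs, ha⟩ : insert a p = insert a' p' ∧ a = a' := by
            have h := Sigma.mk.inj_iff.mp heq
            exact ⟨h.1, eq_of_heq h.2⟩
          subst ha
          have hanp : a ∉ p := by
            intro h
            have := (Finset.mem_inter.mp (h1.2.1 h)).2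
            rw [SimpleGraph.mem_neighborFinset] at this
            exact G.irrefl this
          have hanp' : a ∉ p' := by
            intro h
            have := (Finset.mem_inter.mp (h2.2.1 h)).2
            rw [SimpleGraph.mem_neighborFinset] at this
            exact G.irrefl this
          have : p = p' := by
            have := congrArg (fun t => Finset.erase t a) hs
            simpa [Finset.erase_insert, hanp, hanp'] using this
          simp [this]
        · rintro ⟨s, a⟩ hx
          simp only [Finset.mem_sigma, Finset.mem_powersetCard, Finset.mem_filter] at hx
          obtain ⟨⟨hsub, hcard⟩, has, hadj⟩ := hx
          refine ⟨⟨a, s.erase a⟩, ?_, ?_⟩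
          · simp only [Finset.mem_sigma, Finset.mem_powersetCard]
            refine ⟨hsub has, ?_, ?_⟩
            · intro b hb
              have hbs := Finset.mem_of_mem_erase hb
              have hba := Finset.ne_of_mem_erase hb
              refine Finset.mem_inter.mpr ⟨hsub hbs, ?_⟩
              rw [SimpleGraph.mem_neighborFinset]
              exact hadj b hbs hba
            · rw [Finset.card_erase_of_mem has, hcard]
          · simp [Finset.insert_erase has]
    _ = ∑ s ∈ N.powersetCard 3,
          (s.filter (fun a => ∀ b ∈ s, b ≠ a → G.Adj a b)).card :=
        Finset.card_sigma _ _
    _ = ∑ s ∈ N.powersetCard 3,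
          ((if (edgesIn G.edgeFinset s).card = 2 then 1 else 0)
            + 3 * (if (edgesIn G.edgeFinset s).card = 3 then 1 else 0)) :=
        Finset.sum_congr rfl (fun s hs => key G s (Finset.mem_powersetCard.mp hs).2)
    _ = egoCount G v 2 + 3 * egoCount G v 3 := by
        rw [Finset.sum_add_distrib, ← Finset.mul_sum, egoCount, egoCount,
          Finset.card_filter, Finset.card_filter]

end ThreeProfile
end
end
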